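/- Let p be a prime, n ≥ 2, m ≥ 1 an integer and 1 ≤ i ≤ n-1. For any g ∈ K_m with block form g = [[a,b],[c,d]], the block a lies in GL_{n-1}(ℤ_p), the matrix g' = [[a,b],[0,1]] lies in K_m, and g'^{-1}·g ∈ K_m ∩ ϖ^{f^i} K_m ϖ^{-f^i}; in particular g and g' represent the same left coset of K_m ∩ ϖ^{f^i} K_m ϖ^{-f^i} in K_m. -/

import Mathlib

/-!
Conventions: throughout, the paper's dimension `n ≥ 2` is represented as `n + 1`
where `n : ℕ` satisfies `n ≥ 1`; so matrices in the paper's `GL_n(ℚ_p)` are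
`(n+1) × (n+1)` matrices here, and tuples in the paper's `ℤ^{n-1}` are `f : Fin n → ℤ`.
Elements of `GL(ℚ_p)` are represented as square matrices `g` with `IsUnit g`.
-/

/-- `ψ : ℚ_p → ℂ` is an additive character with conductor `ℤ_p`: a continuous
homomorphism from `(ℚ_p, +)` to the unit circle in `ℂ`, trivial on `ℤ_p`
(the elements of norm at most `1`) but nontrivial on `p⁻¹ℤ_p`
(the elements of norm at most `p`). -/
structure IsAddCharCondZp (p : ℕ) [Fact p.Prime] (ψ : ℚ_[p] → ℂ) : Prop where
  map_add : ∀ x y, ψ (x + y) = ψ x * ψ y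
  continuous : Continuous ψ
  abs_eq_one : ∀ x, ‖ψ x‖ = 1
  trivial_on_int : ∀ x : ℚ_[p], ‖x‖ ≤ 1 → ψ x = 1
  nontrivial_on : ∃ x : ℚ_[p], ‖x‖ ≤ (p : ℝ) ∧ ψ x ≠ 1

variable (p : ℕ) [Fact p.Prime]

/-- `ϖ^f = diag(p^{f 0}, …, p^{f (n-1)}, 1)`. -/
noncomputable def varpi (n : ℕ) (f : Fin n → ℤ) : Matrix (Fin (n + 1)) (Fin (n + 1)) ℚ_[p] :=
  Matrix.diagonal (Fin.snoc (fun j => (p : ℚ_[p]) ^ f j) 1)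

/-- `f` is dominant: `f 0 ≥ f 1 ≥ … ≥ f (n-1) ≥ 0`. -/
def Dominant (n : ℕ) (f : Fin n → ℤ) : Prop :=
  Antitone f ∧ ∀ j, 0 ≤ f j

/-- membership in `U`, the group of upper triangular unipotent matrices. -/
def IsUnipUpper (n : ℕ) (u : Matrix (Fin (n + 1)) (Fin (n + 1)) ℚ_[p]) : Prop :=
  (∀ i j, j < i → u i j = 0) ∧ ∀ i, u i i = 1

/-- the extension of `ψ` to `U`: `ψ(u) = ψ(u_{1,2} + u_{2,3} + … + u_{n-1,n})`. -/
noncomputable def psiU (n : ℕ) (ψ : ℚ_[p] → ℂ)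
    (u : Matrix (Fin (n + 1)) (Fin (n + 1)) ℚ_[p]) : ℂ :=
  ψ (∑ i : Fin n, u i.castSucc i.succ)

/-- the block matrix `[[a, b], [c, d]]` with top-left `n × n` block `a`,
top-right column `b`, bottom row `c` and bottom-right scalar `d`. -/
def blk (n : ℕ) (a : Matrix (Fin n) (Fin n) ℚ_[p]) (b c : Fin n → ℚ_[p]) (d : ℚ_[p]) :
    Matrix (Fin (n + 1)) (Fin (n + 1)) ℚ_[p] :=
  Matrix.of (Fin.snoc (fun i => Fin.snoc (a i) (b i)) (Fin.snoc c d))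

/-- membership in `K_m ⊆ GL_{n+1}(ℤ_p)`: integral entries, determinant a unit of `ℤ_p`,
and last row congruent to `(0, …, 0, 1)` modulo `p^m`. -/
def InK (n m : ℕ) (g : Matrix (Fin (n + 1)) (Fin (n + 1)) ℚ_[p]) : Prop :=
  (∀ i j, ‖g i j‖ ≤ 1) ∧ ‖g.det‖ = 1 ∧
    (∀ j : Fin n, ‖g (Fin.last n) j.castSucc‖ ≤ (p : ℝ) ^ (-(m : ℤ))) ∧
    ‖g (Fin.last n) (Fin.last n) - 1‖ ≤ (p : ℝ) ^ (-(m : ℤ))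

/-- `f^i = (1, …, 1, 0, …, 0)` with `i` ones. -/
def fvec (n i : ℕ) : Fin n → ℤ := fun j => if (j : ℕ) < i then 1 else 0

/-- membership in `K_m ∩ ϖ^{f^i} K_m ϖ^{-f^i}`
(`g ∈ ϖ^{f^i} K_m ϖ^{-f^i}` iff `ϖ^{-f^i} g ϖ^{f^i} ∈ K_m`). -/
def InKcap (n m i : ℕ) (g : Matrix (Fin (n + 1)) (Fin (n + 1)) ℚ_[p]) : Prop :=
  InK p n m g ∧ InK p n m (varpi p n (-(fvec n i)) * g * varpi p n (fvec n i))

/-- membership in `H = GL_n(ℤ_p)`. -/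
def InH (n : ℕ) (h : Matrix (Fin n) (Fin n) ℚ_[p]) : Prop :=
  (∀ i j, ‖h i j‖ ≤ 1) ∧ ‖h.det‖ = 1

/-- `𝜛_i = diag(p, …, p, 1, …, 1)` with `i` entries equal to `p`. -/
noncomputable def wSm (n i : ℕ) : Matrix (Fin n) (Fin n) ℚ_[p] :=
  Matrix.diagonal (fun j => if (j : ℕ) < i then (p : ℚ_[p]) else 1)

/-- `𝜛_i⁻¹ = diag(p⁻¹, …, p⁻¹, 1, …, 1)` with `i` entries equal to `p⁻¹`. -/
noncomputable def wSmInv (n i : ℕ) : Matrix (Fin n) (Fin n) ℚ_[p] :=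
  Matrix.diagonal (fun j => if (j : ℕ) < i then (p : ℚ_[p])⁻¹ else 1)

/-- membership in `H ∩ 𝜛_i H 𝜛_i⁻¹` (`a ∈ 𝜛_i H 𝜛_i⁻¹` iff `𝜛_i⁻¹ a 𝜛_i ∈ H`). -/
def InHcap (n i : ℕ) (a : Matrix (Fin n) (Fin n) ℚ_[p]) : Prop :=
  InH p n a ∧ InH p n (wSmInv p n i * a * wSm p n i)

/-- membership in `L_i = (pℤ_p)^i × ℤ_p^{n-i} ⊆ ℤ_p^n`. -/
def InL (n i : ℕ) (v : Fin n → ℚ_[p]) : Prop :=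
  ∀ j : Fin n, if (j : ℕ) < i then ‖v j‖ ≤ (p : ℝ)⁻¹ else ‖v j‖ ≤ 1

/-- `R` is a complete set of representatives for the left cosets
`H/(H ∩ 𝜛_i H 𝜛_i⁻¹)`: `R ⊆ H` and every `h ∈ H` lies in the coset of
exactly one element of `R`. -/
def IsRepsH (n i : ℕ) (R : Set (Matrix (Fin n) (Fin n) ℚ_[p])) : Prop :=
  (∀ r ∈ R, InH p n r) ∧ ∀ h, InH p n h → ∃! r, r ∈ R ∧ InHcap p n i (r⁻¹ * h)

/-- `S` is a complete set of representatives for `ℤ_p^n/(a·L_i)`: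
`S ⊆ ℤ_p^n` and every `v ∈ ℤ_p^n` is congruent modulo `a·L_i` to
exactly one element of `S`. -/
def IsRepsL (n i : ℕ) (a : Matrix (Fin n) (Fin n) ℚ_[p]) (S : Set (Fin n → ℚ_[p])) : Prop :=
  (∀ x ∈ S, ∀ j, ‖x j‖ ≤ 1) ∧
    ∀ v : Fin n → ℚ_[p], (∀ j, ‖v j‖ ≤ 1) →
      ∃! x, x ∈ S ∧ ∃ w, InL p n i w ∧ v - x = a.mulVec w

/-- `I_i`: the set of `ε ∈ {0,1}^n ⊆ ℤ^n` with `Σ_j ε_j = i`. -/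
def ISet (n i : ℕ) : Set (Fin n → ℤ) :=
  {ε | (∀ j, ε j = 0 ∨ ε j = 1) ∧ ∑ j, ε j = (i : ℤ)}

section AuxLemmas

open Matrix IsUltrametricDist

variable {P : ℕ} [Fact P.Prime]

/-- ultrametric bound for sums -/
lemma aux_norm_sum_le {ι : Type*} (s : Finset ι) (f : ι → ℚ_[P]) {C : ℝ}
    (hC : 0 ≤ C) (h : ∀ i ∈ s, ‖f i‖ ≤ C) : ‖∑ i ∈ s, f i‖ ≤ C :=
  norm_sum_le_of_forall_le_of_nonneg hC h

/-- determinant norm bound with a weight per row -/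
lemma aux_norm_det_le {N : ℕ} (M : Matrix (Fin N) (Fin N) ℚ_[P]) (w : Fin N → ℝ)
    (hw : ∀ j, 0 ≤ w j) (h : ∀ j k, ‖M j k‖ ≤ w j) : ‖M.det‖ ≤ ∏ j, w j := by
  rw [Matrix.det_apply]
  refine aux_norm_sum_le _ _ (Finset.prod_nonneg fun j _ => hw j) ?_
  intro σ _
  have h1 : ‖Equiv.Perm.sign σ • ∏ x, M (σ x) x‖ = ‖∏ x, M (σ x) x‖ := by
    rcases Int.units_eq_one_or (Equiv.Perm.sign σ) with h1 | h1 <;> simp [h1]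
  rw [h1, norm_prod]
  calc ∏ x, ‖M (σ x) x‖ ≤ ∏ x, w (σ x) :=
        Finset.prod_le_prod (fun _ _ => norm_nonneg _) (fun x _ => h _ _)
    _ = ∏ j, w j := Equiv.prod_comp σ w

lemma aux_norm_det_le_one {N : ℕ} (M : Matrix (Fin N) (Fin N) ℚ_[P])
    (h : ∀ j k, ‖M j k‖ ≤ 1) : ‖M.det‖ ≤ 1 := by
  simpa using aux_norm_det_le M (fun _ => 1) (fun _ => zero_le_one) h

/-- entries of the inverse of an integral matrix with unit determinant are integral -/
lemma aux_norm_inv_le_one {N : ℕ} (a : Matrix (Fin N) (Fin N) ℚ_[P])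
    (ha : ∀ j k, ‖a j k‖ ≤ 1) (hd : ‖a.det‖ = 1) : ∀ j k, ‖a⁻¹ j k‖ ≤ 1 := by
  intro j k
  rw [Matrix.inv_def, Matrix.smul_apply, smul_eq_mul, norm_mul, Ring.inverse_eq_inv',
    norm_inv, hd, inv_one, one_mul, Matrix.adjugate_apply]
  refine aux_norm_det_le_one _ fun j' k' => ?_
  rw [Matrix.updateRow_apply]
  split
  · by_cases hk : k' = j <;> simp [Pi.single_apply, hk]
  · exact ha _ _

lemma aux_add_norm_eq {x y : ℚ_[P]} (h : ‖y‖ < ‖x‖) : ‖x + y‖ = ‖x‖ := by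
  rw [Padic.add_eq_max_of_ne h.ne']
  exact max_eq_left h.le

/- blk entry lemmas -/
variable {n : ℕ}

lemma blk_cc (a : Matrix (Fin n) (Fin n) ℚ_[P]) (b c : Fin n → ℚ_[P]) (d : ℚ_[P])
    (j k : Fin n) : blk P n a b c d j.castSucc k.castSucc = a j k := by
  simp [blk, Fin.snoc_castSucc]

lemma blk_cl (a : Matrix (Fin n) (Fin n) ℚ_[P]) (b c : Fin n → ℚ_[P]) (d : ℚ_[P])
    (j : Fin n) : blk P n a b c d j.castSucc (Fin.last n) = b j := by
  simp [blk, Fin.snoc_castSucc, Fin.snoc_last]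

lemma blk_lc (a : Matrix (Fin n) (Fin n) ℚ_[P]) (b c : Fin n → ℚ_[P]) (d : ℚ_[P])
    (k : Fin n) : blk P n a b c d (Fin.last n) k.castSucc = c k := by
  simp [blk, Fin.snoc_castSucc, Fin.snoc_last]

lemma blk_ll (a : Matrix (Fin n) (Fin n) ℚ_[P]) (b c : Fin n → ℚ_[P]) (d : ℚ_[P]) :
    blk P n a b c d (Fin.last n) (Fin.last n) = d := by
  simp [blk, Fin.snoc_last]

lemma blk_one : blk P n 1 0 0 1 = (1 : Matrix (Fin (n + 1)) (Fin (n + 1)) ℚ_[P]) := by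
  ext j k
  refine Fin.lastCases ?_ (fun j => ?_) j <;> refine Fin.lastCases ?_ (fun k => ?_) k
  · simp [blk_ll, Matrix.one_apply]
  · simp [blk_lc, Matrix.one_apply, (Fin.castSucc_lt_last k).ne']
  · simp [blk_cl, Matrix.one_apply, (Fin.castSucc_lt_last j).ne]
  · simp [blk_cc, Matrix.one_apply, Fin.castSucc_inj]

lemma blk_mul (A a : Matrix (Fin n) (Fin n) ℚ_[P]) (B b C c : Fin n → ℚ_[P]) (D d : ℚ_[P]) :
    blk P n A B C D * blk P n a b c d =
      blk P n (A * a + Matrix.of fun j k => B j * c k) (A.mulVec b + d • B)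
        (Matrix.vecMul C a + D • c) (C ⬝ᵥ b + D * d) := by
  ext j k
  rw [Matrix.mul_apply]
  refine Fin.lastCases ?_ (fun j => ?_) j <;> refine Fin.lastCases ?_ (fun k => ?_) k <;>
    simp [Fin.sum_univ_castSucc, blk_cc, blk_cl, blk_lc, blk_ll, Matrix.mul_apply,
      Matrix.mulVec, Matrix.vecMul, dotProduct, mul_comm]

lemma blk_updateRow (a : Matrix (Fin n) (Fin n) ℚ_[P]) (b c c' : Fin n → ℚ_[P]) (d d' : ℚ_[P]) :
    (blk P n a b c d).updateRow (Fin.last n) (Fin.snoc c' d') = blk P n a b c' d' := by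
  ext j k
  refine Fin.lastCases ?_ (fun j => ?_) j
  · rw [Matrix.updateRow_self]
    refine Fin.lastCases ?_ (fun k => ?_) k
    · simp [blk_ll]
    · simp [blk_lc]
  · rw [Matrix.updateRow_ne (Fin.castSucc_lt_last j).ne]
    refine Fin.lastCases ?_ (fun k => ?_) k <;> simp [blk_cc, blk_cl]

lemma det_blk_zero_row (a : Matrix (Fin n) (Fin n) ℚ_[P]) (b : Fin n → ℚ_[P]) (d : ℚ_[P]) :
    (blk P n a b 0 d).det = d * a.det := by
  rw [Matrix.det_succ_row _ (Fin.last n), Fin.sum_univ_castSucc]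
  have h0 : ∀ k : Fin n, blk P n a b 0 d (Fin.last n) k.castSucc = 0 := fun k => by rw [blk_lc]; rfl
  have hsub : (blk P n a b 0 d).submatrix (Fin.last n).succAbove (Fin.last n).succAbove = a := by
    ext j k
    simp [Matrix.submatrix_apply, Fin.succAbove_last, blk_cc]
  simp only [h0, mul_zero, zero_mul, Finset.sum_const_zero, zero_add, hsub, blk_ll]
  have : (-1 : ℚ_[P]) ^ ((Fin.last n : ℕ) + (Fin.last n : ℕ)) = 1 :=
    Even.neg_one_pow ⟨n, by simp [Fin.val_last]⟩
  rw [this, one_mul]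

lemma det_blk_split (a : Matrix (Fin n) (Fin n) ℚ_[P]) (b c : Fin n → ℚ_[P]) (d : ℚ_[P]) :
    (blk P n a b c d).det = (blk P n a b 0 d).det + (blk P n a b c 0).det := by
  have h1 : (Fin.snoc (0 : Fin n → ℚ_[P]) d + Fin.snoc c 0 : Fin (n + 1) → ℚ_[P]) = Fin.snoc c d := by
    funext k
    refine Fin.lastCases ?_ (fun k => ?_) k <;> simp
  calc (blk P n a b c d).det
      = ((blk P n a b c d).updateRow (Fin.last n) (Fin.snoc (0 : Fin n → ℚ_[P]) d + Fin.snoc c 0)).det := by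
        rw [h1, blk_updateRow]
    _ = (blk P n a b 0 d).det + (blk P n a b c 0).det := by
        rw [Matrix.det_updateRow_add, blk_updateRow, blk_updateRow]

end AuxLemmas
/-- for `g = [[a,b],[c,d]] ∈ K_m` (with `m ≥ 1`), the block `a` lies in
`GL_n(ℤ_p)`, the matrix `g' = [[a,b],[0,1]]` lies in `K_m`, and
`g'⁻¹ · g ∈ K_m ∩ ϖ^{f^i} K_m ϖ^{-f^i}`; in particular `g` and `g'` represent the same
left coset of `K_m ∩ ϖ^{f^i} K_m ϖ^{-f^i}` in `K_m`. -/
theorem coset_representative_of_mem_K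
    (p : ℕ) [Fact p.Prime] (n : ℕ) (hn : 1 ≤ n) (m : ℕ) (hm : 1 ≤ m)
    (i : ℕ) (hi1 : 1 ≤ i) (hi2 : i ≤ n)
    (a : Matrix (Fin n) (Fin n) ℚ_[p]) (b c : Fin n → ℚ_[p]) (d : ℚ_[p])
    (hg : InK p n m (blk p n a b c d)) :
    InH p n a ∧ InK p n m (blk p n a b 0 1) ∧
      InKcap p n m i ((blk p n a b 0 1)⁻¹ * blk p n a b c d) := by
  obtain ⟨hint, hdet, hrow, hcorner⟩ := hg
  have hp1 : (1:ℝ) < p := by exact_mod_cast (Fact.out (p := p.Prime)).one_lt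
  have hp0 : (0:ℝ) < p := lt_trans one_pos hp1
  have hpQ0 : (p:ℚ_[p]) ≠ 0 := Nat.cast_ne_zero.mpr (Fact.out (p := p.Prime)).ne_zero
  set ε : ℝ := (p:ℝ) ^ (-(m:ℤ)) with hε
  have hε0 : 0 < ε := zpow_pos hp0 _
  have hεle : ε ≤ (p:ℝ)⁻¹ := by
    rw [hε, ← zpow_neg_one]
    exact zpow_le_zpow_right₀ hp1.le (by omega)
  have hεlt1 : ε < 1 := lt_of_le_of_lt hεle (inv_lt_one_of_one_lt₀ hp1)
  have hεle1 : ε ≤ 1 := hεlt1.le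
  -- entries of g
  have ha_int : ∀ j k, ‖a j k‖ ≤ 1 := fun j k => by
    have := hint j.castSucc k.castSucc; rwa [blk_cc] at this
  have hb_int : ∀ j, ‖b j‖ ≤ 1 := fun j => by
    have := hint j.castSucc (Fin.last n); rwa [blk_cl] at this
  have hc : ∀ k, ‖c k‖ ≤ ε := fun k => by
    have := hrow k; rwa [blk_lc] at this
  have hd1 : ‖d - 1‖ ≤ ε := by
    have := hcorner; rwa [blk_ll] at this
  have hd : ‖d‖ = 1 := by
    have h1 : d = 1 + (d - 1) := by ring
    rw [h1, aux_add_norm_eq (by rw [norm_one]; exact lt_of_le_of_lt hd1 hεlt1), norm_one]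
  -- determinant of a
  have hX : ‖(blk p n a b c 0).det‖ ≤ ε := by
    have hb := aux_norm_det_le (blk p n a b c 0)
      (fun j => if j = Fin.last n then ε else 1)
      (fun j => by split <;> [exact hε0.le; exact zero_le_one]) ?_
    · simpa [Finset.prod_ite_eq'] using hb
    · intro j k
      refine Fin.lastCases ?_ (fun j => ?_) j
      · rw [if_pos rfl]
        refine Fin.lastCases ?_ (fun k => ?_) k
        · rw [blk_ll, norm_zero]; exact hε0.le
        · rw [blk_lc]; exact hc k
      · rw [if_neg (Fin.castSucc_lt_last j).ne]
        refine Fin.lastCases ?_ (fun k => ?_) k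
        · rw [blk_cl]; exact hb_int j
        · rw [blk_cc]; exact ha_int j k
  have hda : ‖d * a.det‖ = 1 := by
    have heq : d * a.det = (blk p n a b c d).det + -((blk p n a b c 0).det) := by
      rw [det_blk_split, det_blk_zero_row]; ring
    rw [heq, aux_add_norm_eq (by rw [norm_neg, hdet]; exact lt_of_le_of_lt hX hεlt1), hdet]
  have hadet : ‖a.det‖ = 1 := by rwa [norm_mul, hd, one_mul] at hda
  have hInHa : InH p n a := ⟨ha_int, hadet⟩
  -- g' ∈ K_m
  have hg'det : (blk p n a b 0 1).det = a.det := by rw [det_blk_zero_row, one_mul]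
  have hg'K : InK p n m (blk p n a b 0 1) := by
    refine ⟨?_, ?_, ?_, ?_⟩
    · intro j k
      refine Fin.lastCases ?_ (fun j => ?_) j <;> refine Fin.lastCases ?_ (fun k => ?_) k
      · rw [blk_ll, norm_one]
      · rw [blk_lc, Pi.zero_apply, norm_zero]; exact zero_le_one
      · rw [blk_cl]; exact hb_int j
      · rw [blk_cc]; exact ha_int j k
    · rw [hg'det]; exact hadet
    · intro k; rw [blk_lc, Pi.zero_apply, norm_zero]; exact hε0.le
    · rw [blk_ll, sub_self, norm_zero]; exact hε0.le
  -- inverse of g'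
  have hadet0 : a.det ≠ 0 := by
    intro h; rw [h, norm_zero] at hadet; exact zero_ne_one hadet
  have haU : IsUnit a.det := isUnit_iff_ne_zero.mpr hadet0
  have hainv : ∀ j k, ‖a⁻¹ j k‖ ≤ 1 := aux_norm_inv_le_one a ha_int hadet
  set v : Fin n → ℚ_[p] := a⁻¹.mulVec b with hv
  have hv_int : ∀ j, ‖v j‖ ≤ 1 := by
    intro j
    have h1 : v j = ∑ k, a⁻¹ j k * b k := by
      rw [hv]; simp [Matrix.mulVec, dotProduct]
    rw [h1]
    refine aux_norm_sum_le _ _ zero_le_one fun k _ => ?_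
    rw [norm_mul]
    exact mul_le_one₀ (hainv j k) (norm_nonneg _) (hb_int k)
  have hinv_left : blk p n a⁻¹ (-v) 0 1 * blk p n a b 0 1 = 1 := by
    rw [blk_mul]
    have e1 : a⁻¹ * a + (Matrix.of fun j k => (-v) j * (0 : Fin n → ℚ_[p]) k) = 1 := by
      rw [Matrix.nonsing_inv_mul a haU]
      ext j k; simp
    have e2 : a⁻¹.mulVec b + (1:ℚ_[p]) • (-v) = 0 := by
      funext j; simp [hv]
    have e3 : Matrix.vecMul (0 : Fin n → ℚ_[p]) a + (1:ℚ_[p]) • (0 : Fin n → ℚ_[p]) = 0 := by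
      funext j; simp
    have e4 : dotProduct (0 : Fin n → ℚ_[p]) b + (1:ℚ_[p]) * 1 = 1 := by simp
    rw [e1, e2, e3, e4, blk_one]
  have hg'inv : (blk p n a b 0 1)⁻¹ = blk p n a⁻¹ (-v) 0 1 := Matrix.inv_eq_left_inv hinv_left
  -- the quotient M = g'⁻¹ g
  set M := (blk p n a b 0 1)⁻¹ * blk p n a b c d with hM
  have hMeq : M = blk p n (a⁻¹ * a + Matrix.of fun j k => (-v) j * c k)
      (a⁻¹.mulVec b + d • (-v)) (Matrix.vecMul (0 : Fin n → ℚ_[p]) a + (1:ℚ_[p]) • c)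
      (dotProduct (0 : Fin n → ℚ_[p]) b + (1:ℚ_[p]) * d) := by
    rw [hM, hg'inv, blk_mul]
  have hnear : ∀ j k, ‖M j k - (1 : Matrix (Fin (n+1)) (Fin (n+1)) ℚ_[p]) j k‖ ≤ ε := by
    intro j k
    rw [hMeq]
    refine Fin.lastCases ?_ (fun j => ?_) j <;> refine Fin.lastCases ?_ (fun k => ?_) k
    · rw [blk_ll, Matrix.one_apply_eq]
      have : dotProduct (0 : Fin n → ℚ_[p]) b + (1:ℚ_[p]) * d = d := by simp
      rw [this]; exact hd1
    · rw [blk_lc, Matrix.one_apply_ne (Fin.castSucc_lt_last k).ne', sub_zero]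
      have : (Matrix.vecMul (0 : Fin n → ℚ_[p]) a + (1:ℚ_[p]) • c) k = c k := by simp
      rw [this]; exact hc k
    · rw [blk_cl, Matrix.one_apply_ne (Fin.castSucc_lt_last j).ne, sub_zero]
      have h1 : (a⁻¹.mulVec b + d • (-v)) j = (1 - d) * v j := by
        simp only [Pi.add_apply, Pi.smul_apply, Pi.neg_apply, smul_eq_mul, ← hv]
        ring
      rw [h1, norm_mul, norm_sub_rev]
      calc ‖d - 1‖ * ‖v j‖ ≤ ε * 1 :=
            mul_le_mul hd1 (hv_int j) (norm_nonneg _) hε0.le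
        _ = ε := mul_one ε
    · have h1 : (a⁻¹ * a + Matrix.of fun j k => (-v) j * c k) j k
          = (1:Matrix (Fin n) (Fin n) ℚ_[p]) j k + (-(v j)) * c k := by
        rw [Matrix.nonsing_inv_mul a haU]; simp
      have h2 : (1 : Matrix (Fin (n+1)) (Fin (n+1)) ℚ_[p]) j.castSucc k.castSucc
          = (1 : Matrix (Fin n) (Fin n) ℚ_[p]) j k := by
        simp [Matrix.one_apply, Fin.castSucc_inj]
      rw [blk_cc, h1, h2, add_sub_cancel_left, norm_mul, norm_neg]
      calc ‖v j‖ * ‖c k‖ ≤ 1 * ε :=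
            mul_le_mul (hv_int j) (hc k) (norm_nonneg _) zero_le_one
        _ = ε := one_mul ε
  have hMdet : ‖M.det‖ = 1 := by
    rw [hM, Matrix.det_mul, Matrix.det_nonsing_inv, hg'det, Ring.inverse_eq_inv',
      norm_mul, norm_inv, hadet, inv_one, one_mul, hdet]
  have hMK : InK p n m M := by
    refine ⟨?_, hMdet, ?_, ?_⟩
    · intro j k
      have h1 := hnear j k
      have h2 : ‖(1 : Matrix (Fin (n+1)) (Fin (n+1)) ℚ_[p]) j k‖ ≤ 1 := by
        rcases eq_or_ne j k with h | h <;> simp [Matrix.one_apply, h]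
      calc ‖M j k‖ = ‖(M j k - (1 : Matrix (Fin (n+1)) (Fin (n+1)) ℚ_[p]) j k)
            + (1 : Matrix (Fin (n+1)) (Fin (n+1)) ℚ_[p]) j k‖ := by congr 1; ring
        _ ≤ max ‖M j k - (1 : Matrix (Fin (n+1)) (Fin (n+1)) ℚ_[p]) j k‖
            ‖(1 : Matrix (Fin (n+1)) (Fin (n+1)) ℚ_[p]) j k‖ :=
              Padic.nonarchimedean (p := p) _ _
        _ ≤ 1 := max_le (le_trans h1 hεle1) h2
    · intro k
      have := hnear (Fin.last n) k.castSucc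
      rwa [Matrix.one_apply_ne (Fin.castSucc_lt_last k).ne', sub_zero] at this
    · have := hnear (Fin.last n) (Fin.last n)
      rwa [Matrix.one_apply_eq] at this
  -- the conjugated matrix
  set w : Fin (n+1) → ℤ := fun j => if (j:ℕ) < i then 1 else 0 with hwdef
  have hwlast : w (Fin.last n) = 0 := by
    rw [hwdef]; simp only [Fin.val_last]; rw [if_neg (by omega)]
  have hw0 : ∀ j, 0 ≤ w j := fun j => by rw [hwdef]; dsimp only; split <;> omega
  have hw1 : ∀ j, w j ≤ 1 := fun j => by rw [hwdef]; dsimp only; split <;> omega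
  have hvarpiF : ∀ j : Fin (n+1),
      (Fin.snoc (fun j => (p:ℚ_[p]) ^ (fvec n i) j) 1 : Fin (n+1) → ℚ_[p]) j
        = (p:ℚ_[p]) ^ (w j) := by
    intro j
    refine Fin.lastCases ?_ (fun j => ?_) j
    · rw [Fin.snoc_last, hwlast, zpow_zero]
    · rw [Fin.snoc_castSucc, hwdef]
      simp only [fvec, Fin.coe_castSucc]
  have hvarpiN : ∀ j : Fin (n+1),
      (Fin.snoc (fun j => (p:ℚ_[p]) ^ (-(fvec n i)) j) 1 : Fin (n+1) → ℚ_[p]) j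
        = (p:ℚ_[p]) ^ (-(w j)) := by
    intro j
    refine Fin.lastCases ?_ (fun j => ?_) j
    · rw [Fin.snoc_last, hwlast, neg_zero, zpow_zero]
    · rw [Fin.snoc_castSucc, hwdef]
      simp only [fvec, Fin.coe_castSucc, Pi.neg_apply]
  have hNe : ∀ (X : Matrix (Fin (n+1)) (Fin (n+1)) ℚ_[p]) (j k : Fin (n+1)),
      (varpi p n (-(fvec n i)) * X * varpi p n (fvec n i)) j k
        = (p:ℚ_[p]) ^ (-(w j)) * X j k * (p:ℚ_[p]) ^ (w k) := by
    intro X j k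
    rw [varpi, varpi, Matrix.mul_diagonal, Matrix.diagonal_mul, hvarpiF, hvarpiN]
  have hNnorm : ∀ (j k : Fin (n+1)),
      ‖(varpi p n (-(fvec n i)) * M * varpi p n (fvec n i)) j k‖
        = (p:ℝ) ^ (w j) * ‖M j k‖ * (p:ℝ) ^ (-(w k)) := by
    intro j k
    rw [hNe, norm_mul, norm_mul, Padic.norm_p_zpow, Padic.norm_p_zpow, neg_neg]
  have hDD : varpi p n (-(fvec n i)) * varpi p n (fvec n i) = 1 := by
    rw [varpi, varpi, Matrix.diagonal_mul_diagonal]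
    have h1 : (fun j => (Fin.snoc (fun j => (p:ℚ_[p]) ^ (-(fvec n i)) j) 1 : Fin (n+1) → ℚ_[p]) j *
        (Fin.snoc (fun j => (p:ℚ_[p]) ^ (fvec n i) j) 1 : Fin (n+1) → ℚ_[p]) j)
          = fun _ => (1:ℚ_[p]) := by
      funext j
      rw [hvarpiN, hvarpiF, ← zpow_add₀ hpQ0, neg_add_cancel, zpow_zero]
    rw [h1]
    exact Matrix.diagonal_one
  have hNK : InK p n m (varpi p n (-(fvec n i)) * M * varpi p n (fvec n i)) := by
    refine ⟨?_, ?_, ?_, ?_⟩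
    · intro j k
      rw [hNnorm]
      by_cases hj : (j:ℕ) < i
      · by_cases hk : (k:ℕ) < i
        · have hj' : w j = 1 := by rw [hwdef]; exact if_pos hj
          have hk' : w k = 1 := by rw [hwdef]; exact if_pos hk
          rw [hj', hk', zpow_one, zpow_neg_one]
          calc (p:ℝ) * ‖M j k‖ * (p:ℝ)⁻¹ = ‖M j k‖ * ((p:ℝ) * (p:ℝ)⁻¹) := by ring
            _ = ‖M j k‖ := by rw [mul_inv_cancel₀ hp0.ne', mul_one]
            _ ≤ 1 := hMK.1 j k
        · have hj' : w j = 1 := by rw [hwdef]; exact if_pos hj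
          have hk' : w k = 0 := by rw [hwdef]; exact if_neg hk
          have hjk : j ≠ k := by
            intro h; rw [h] at hj; exact hk hj
          have hMjk : ‖M j k‖ ≤ ε := by
            have := hnear j k
            rwa [Matrix.one_apply_ne hjk, sub_zero] at this
          rw [hj', hk', zpow_one, neg_zero, zpow_zero, mul_one]
          calc (p:ℝ) * ‖M j k‖ ≤ (p:ℝ) * (p:ℝ)⁻¹ :=
                mul_le_mul_of_nonneg_left (le_trans hMjk hεle) hp0.le
            _ = 1 := mul_inv_cancel₀ hp0.ne'
      · have hj' : w j = 0 := by rw [hwdef]; exact if_neg hj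
        rw [hj', zpow_zero, one_mul]
        have h1 : (p:ℝ) ^ (-(w k)) ≤ 1 := zpow_le_one_of_nonpos₀ hp1.le (by
          have := hw0 k; omega)
        exact mul_le_one₀ (hMK.1 j k) (zpow_pos hp0 _).le h1
    · have h1 : (varpi p n (-(fvec n i)) * M * varpi p n (fvec n i)).det
          = M.det * ((varpi p n (-(fvec n i))).det * (varpi p n (fvec n i)).det) := by
        rw [Matrix.det_mul, Matrix.det_mul]; ring
      have h2 : (varpi p n (-(fvec n i))).det * (varpi p n (fvec n i)).det = 1 := by
        rw [← Matrix.det_mul, hDD, Matrix.det_one]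
      rw [h1, h2, mul_one, hMdet]
    · intro k
      rw [hNnorm, hwlast, zpow_zero, one_mul]
      have h1 : (p:ℝ) ^ (-(w k.castSucc)) ≤ 1 := zpow_le_one_of_nonpos₀ hp1.le (by
        have := hw0 k.castSucc; omega)
      calc ‖M (Fin.last n) k.castSucc‖ * (p:ℝ) ^ (-(w k.castSucc))
          ≤ ε * 1 := mul_le_mul (hMK.2.2.1 k) h1 (zpow_pos hp0 _).le hε0.le
        _ = ε := mul_one ε
    · have h1 : (varpi p n (-(fvec n i)) * M * varpi p n (fvec n i)) (Fin.last n) (Fin.last n)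
          = M (Fin.last n) (Fin.last n) := by
        rw [hNe, hwlast, neg_zero, zpow_zero, one_mul, mul_one]
      rw [h1]
      exact hMK.2.2.2
  exact ⟨hInHa, hg'K, hMK, hNK⟩
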